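/- Let Γ be an unsigned GKM graph with axial function α : E → ℤ^k/±1 and lift α̃ with components α̃_1,…,α̃_k ∈ L(Γ). Then Γ is effective (i.e., the ℤ-span of the image of α̃ equals ℤ^k) if and only if {α̃_1,…,α̃_k} forms a primitive set in L(Γ), i.e., the α̃_i are linearly independent and the intersection of their ℚ-span with L(Γ) equals their ℤ-span. -/

import Mathlib

lemma lin_expand {k : ℕ} (L : (Fin k → ℤ) →ₗ[ℤ] ℤ) (x : Fin k → ℤ) :
    L x = ∑ j, x j * L (Pi.single j 1) := by
  conv_lhs => rw [← Finset.univ_sum_single x]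
  rw [map_sum]
  refine Finset.sum_congr rfl fun j _ => ?_
  have h : Pi.single j (x j) = x j • (Pi.single j (1:ℤ) : Fin k → ℤ) := by
    ext m; by_cases hm : m = j <;> simp [Pi.single_apply, hm]
  rw [h, map_smul, smul_eq_mul]

lemma li_rat {E : Type*} {k : ℕ} (lab : E → Fin k → ℤ)
    (hLI : LinearIndependent ℤ (fun j : Fin k => (fun e => lab e j : E → ℤ)))
    (r : Fin k → ℚ) (hr : ∀ e, ∑ j, r j * lab e j = 0) : r = 0 := by
  classical
  set N : ℤ := ∏ j, ((r j).den : ℤ) with hN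
  have hNden : ∀ j, ((r j).den : ℤ) ∣ N := fun j => Finset.dvd_prod_of_mem _ (Finset.mem_univ j)
  have hNne : (N:ℚ) ≠ 0 := by
    rw [hN]; push_cast
    exact Finset.prod_ne_zero_iff.mpr fun j _ => Nat.cast_ne_zero.mpr (r j).den_nz
  have hint : ∀ j, ∃ z : ℤ, (z:ℚ) = N * r j := by
    intro j
    obtain ⟨m, hm⟩ := hNden j
    refine ⟨(r j).num * m, ?_⟩
    push_cast
    rw [hm]
    push_cast
    have hdr : ((r j).den : ℚ) * r j = ((r j).num : ℚ) := by
      exact_mod_cast Rat.den_mul_eq_num (r j)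
    rw [mul_assoc, mul_comm (m:ℚ) (r j), ← mul_assoc, hdr]
  choose t ht using hint
  have htz : ∀ e, ∑ j, t j * lab e j = 0 := by
    intro e
    have hc : ((∑ j, t j * lab e j : ℤ) : ℚ) = 0 := by
      push_cast
      calc ∑ j, (t j : ℚ) * (lab e j : ℚ) = ∑ j, (N:ℚ) * (r j * (lab e j : ℚ)) := by
            refine Finset.sum_congr rfl fun j _ => ?_
            rw [ht j]; ring
        _ = (N:ℚ) * ∑ j, r j * (lab e j : ℚ) := (Finset.mul_sum _ _ _).symm
        _ = 0 := by rw [hr e, mul_zero]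
    exact_mod_cast hc
  have ht0 : ∀ j, t j = 0 := by
    refine Fintype.linearIndependent_iff.mp hLI t ?_
    funext e
    simpa [Finset.sum_apply, smul_eq_mul] using htz e
  funext j
  have h2 : (N:ℚ) * r j = 0 := by rw [← ht j, ht0 j, Int.cast_zero]
  have := mul_eq_zero.mp h2
  simpa [hNne] using this




attribute [local instance] Classical.propDecidable

/-- A graph with directed edges `E`, vertices `V`, edge reversal, and a
(combinatorial) connection `conn`, where `conn e e'` is the transport of an
edge `e'` with `ini e' = ini e` along the edge `e`. -/
structure ConnGraph (V : Type*) (E : Type*) where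
  ini : E → V
  ter : E → V
  rev : E → E
  rev_ini : ∀ e, ini (rev e) = ter e
  rev_ter : ∀ e, ter (rev e) = ini e
  rev_rev : ∀ e, rev (rev e) = e
  conn : E → E → E
  conn_ini : ∀ e e', ini e' = ini e → ini (conn e e') = ter e
  conn_self : ∀ e, conn e e = rev e
  conn_inv : ∀ e e', ini e' = ini e → conn (rev e) (conn e e') = e'

namespace ConnGraph

variable {V E : Type*} (G : ConnGraph V E)

/-- One step of adjacency along an edge. -/
def Step (a b : V) : Prop := ∃ e : E, G.ini e = a ∧ G.ter e = b

/-- The graph is connected. -/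
def Connected : Prop := ∀ a b : V, Relation.ReflTransGen G.Step a b

/-- The graph is `n`-valent: every star has exactly `n` edges. -/
def NValent (n : ℕ) : Prop := ∀ v : V, {e : E | G.ini e = v}.ncard = n

/-- A sign function on a graph with connection: `ε e e'` plays the role of
`⟨ε(e), e'⟩` for `e'` in the star of `ini e`. -/
def IsSignFunction (ε : E → E → ℤ) : Prop :=
  (∀ e e' : E, G.ini e' = G.ini e → ε e e' = 1 ∨ ε e e' = -1) ∧
  (∀ e : E, ε e e = 1) ∧
  (∀ e e' : E, G.ini e' = G.ini e → ε (G.rev e) (G.conn e e') = ε e e')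

/-- An invariant function (relative to a sign function): `c e e'` plays the
role of `⟨c(e), e'⟩`. -/
def IsInvariantFunction (ε c : E → E → ℤ) : Prop :=
  (∀ e : E, c e e = -2) ∧
  (∀ e e' : E, G.ini e' = G.ini e →
    c e e' = ε (G.rev e) (G.conn e e') * c (G.rev e) (G.conn e e'))

/-- A label function: an element of the group `L(Γ)`. -/
def IsLabelFunction (ε c : E → E → ℤ) (a : E → ℤ) : Prop :=
  ∀ e e' : E, G.ini e' = G.ini e →
    a (G.conn e e') = ε e e' * a e' + c e e' * a e

/-- `x : E → ℤ` represents an element of `ℤ star(v)`: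
it is supported on the star of `v`. -/
def StarSupported (v : V) (x : E → ℤ) : Prop := ∀ e : E, G.ini e ≠ v → x e = 0

/-- An element of the group of axial functions `A(Γ)`: a tuple `(f v)_{v ∈ V}`
with `f v ∈ ℤ star(v)`, satisfying `f (t e) = φ_e (f (i e))` for every edge. -/
def IsAxialTuple (ε c : E → E → ℤ) (f : V → E → ℤ) : Prop :=
  (∀ v : V, G.StarSupported v (f v)) ∧
  (∀ e e' : E, G.ini e' = G.ini e →
    f (G.ter e) (G.conn e e') = ε e e' * f (G.ini e) e' + f (G.ini e) e * c e e')

/-- The map `φ_e : ℤ star(i e) → ℤ star(t e)`,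
`φ_e(x) = ∇_e (ε(e)·x + ⟨x, e⟩·c(e))`. -/
noncomputable def phi (ε c : E → E → ℤ) (e : E) (x : E → ℤ) : E → ℤ := fun e'' =>
  if G.ini e'' = G.ter e then
    ε e (G.conn (G.rev e) e'') * x (G.conn (G.rev e) e'') +
      x e * c e (G.conn (G.rev e) e'')
  else 0

/-- `φ_γ` for an edge path `γ = (e₁, …, e_q)`: the composite
`φ_{e_q} ∘ ⋯ ∘ φ_{e₁}`. -/
noncomputable def phiList (ε c : E → E → ℤ) : List E → (E → ℤ) → (E → ℤ)
  | [], x => x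
  | e :: l, x => phiList ε c l (G.phi ε c e x)

/-- The parallel transport (monodromy) operator `Π_γ = ∇_{e_q} ∘ ⋯ ∘ ∇_{e₁}`
along an edge path, on edges. -/
def transportList : List E → E → E
  | [], x => x
  | e :: l, x => transportList l (G.conn e x)

/-- `IsPath u w l`: the list of edges `l` is an edge path from `u` to `w`. -/
def IsPath : V → V → List E → Prop
  | u, w, [] => u = w
  | u, w, e :: l => G.ini e = u ∧ IsPath (G.ter e) w l

/-- Elementary homotopy of edge paths: deletion of a backtrack `(e, ē)`. -/
inductive HomotopyStep : List E → List E → Prop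
  | backtrack (l₁ l₂ : List E) (e : E) :
      HomotopyStep (l₁ ++ e :: G.rev e :: l₂) (l₁ ++ l₂)

/-- Homotopy of edge paths: the equivalence relation generated by insertion
and deletion of backtracks. -/
def Homotopic : List E → List E → Prop := Relation.EqvGen G.HomotopyStep

/-- A 2-face: a nonempty connected 2-valent subgraph (given by its set of
edges, closed under reversal) which is invariant under the connection. -/
def IsTwoFace (F : Set E) : Prop :=
  F.Nonempty ∧
  (∀ e ∈ F, G.rev e ∈ F) ∧
  (∀ e ∈ F, {e' : E | e' ∈ F ∧ G.ini e' = G.ini e}.ncard = 2) ∧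
  (∀ e ∈ F, ∀ e' ∈ F, G.ini e' = G.ini e → G.conn e e' ∈ F) ∧
  (∀ e ∈ F, ∀ e' ∈ F, ∃ l : List E,
    (∀ x ∈ l, x ∈ F) ∧ G.IsPath (G.ini e) (G.ini e') l)

/-- `f` is a boundary cycle of the 2-face `F`, based at `w`: a closed edge
path at `w` traversing each geometric edge of `F` exactly once. -/
def IsFaceBoundary (F : Set E) (w : V) (f : List E) : Prop :=
  G.IsTwoFace F ∧ f ≠ [] ∧ G.IsPath w w f ∧ (∀ e ∈ f, e ∈ F) ∧
  f.Nodup ∧ (∀ e ∈ f, G.rev e ∉ f) ∧ (∀ e ∈ F, e ∈ f ∨ G.rev e ∈ f)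

/-- A conjugated 2-face at the base vertex `v`: a loop of the form
`g · f · g⁻¹` where `g` is an edge path from `v` and `f` is a boundary cycle
of a 2-face based at the endpoint of `g`. -/
def ConjFaceLoop (v : V) (l : List E) : Prop :=
  ∃ (w : V) (g f : List E) (F : Set E),
    G.IsPath v w g ∧ G.IsFaceBoundary F w f ∧
    l = g ++ f ++ (g.reverse.map G.rev)

/-- The conjugated 2-faces generate the fundamental group (the edge-path
group): every closed edge path is homotopic to a concatenation of conjugated
2-face loops. -/
def FacesGeneratePi1 : Prop :=
  ∀ (v : V) (l : List E), G.IsPath v v l →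
    ∃ ls : List (List E), (∀ m ∈ ls, G.ConjFaceLoop v m) ∧
      G.Homotopic l ls.flatten

end ConnGraph

/-- `(G, lab)` is an abstract unsigned GKM graph, where `lab` is a chosen lift
`α̃ : E → ℤ^k` of the unsigned axial function `α : E → ℤ^k/±1`. -/
structure IsUnsignedGKM {V E : Type*} (G : ConnGraph V E) {k : ℕ}
    (lab : E → Fin k → ℤ) : Prop where
  connected : G.Connected
  lab_ne : ∀ e : E, lab e ≠ 0
  lab_rev : ∀ e : E, lab (G.rev e) = -lab e
  indep₂ : ∀ e e' : E, G.ini e' = G.ini e → e ≠ e' →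
    LinearIndependent ℚ ![(fun j => (lab e j : ℚ)), (fun j => (lab e' j : ℚ))]
  congru : ∀ e e' : E, G.ini e' = G.ini e →
    ∃ s m : ℤ, (s = 1 ∨ s = -1) ∧ lab (G.conn e e') = s • lab e' + m • lab e

/-- The GKM₃ condition: any three labels at a common vertex are linearly
independent over `ℚ`. -/
def IsGKM3 {V E : Type*} (G : ConnGraph V E) {k : ℕ} (lab : E → Fin k → ℤ) : Prop :=
  ∀ e₁ e₂ e₃ : E, G.ini e₂ = G.ini e₁ → G.ini e₃ = G.ini e₁ →
    e₁ ≠ e₂ → e₁ ≠ e₃ → e₂ ≠ e₃ →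
    LinearIndependent ℚ
      ![(fun j => (lab e₁ j : ℚ)), (fun j => (lab e₂ j : ℚ)),
        (fun j => (lab e₃ j : ℚ))]

/-- `(ε, c)` are the sign and integer data associated to the lift `lab` of the
axial function, via the congruence relation
`α̃(∇_e e') = ⟨ε(e),e'⟩·α̃(e') + ⟨c(e),e'⟩·α̃(e)`, normalized by
`⟨ε(e),e⟩ = 1` and `⟨c(e),e⟩ = -2`. -/
def IsCompatibleData {V E : Type*} (G : ConnGraph V E) {k : ℕ}
    (lab : E → Fin k → ℤ) (ε c : E → E → ℤ) : Prop :=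
  (∀ e e' : E, G.ini e' = G.ini e → ε e e' = 1 ∨ ε e e' = -1) ∧
  (∀ e : E, ε e e = 1) ∧ (∀ e : E, c e e = -2) ∧
  (∀ e e' : E, G.ini e' = G.ini e →
    lab (G.conn e e') = ε e e' • lab e' + c e e' • lab e)

/-- The axial function is almost effective: the `ℤ`-span of its image has
finite index in `ℤ^k`. -/
def AlmostEffective {E : Type*} {k : ℕ} (lab : E → Fin k → ℤ) : Prop :=
  (Submodule.span ℤ (Set.range lab)).toAddSubgroup.index ≠ 0

/-- The axial function is effective: the `ℤ`-span of its image is all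
of `ℤ^k`. -/
def Effective {E : Type*} {k : ℕ} (lab : E → Fin k → ℤ) : Prop :=
  Submodule.span ℤ (Set.range lab) = ⊤

/-- An unsigned GKM graph is effective (the `ℤ`-span of the
image of the lift `α̃` equals `ℤ^k`) if and only if the components
`α̃_1, …, α̃_k` form a primitive set in `L(Γ)`: they are linearly independent,
and every label function lying in their `ℚ`-span lies in their `ℤ`-span. -/
theorem effective_iff_components_primitive {V E : Type*} {n k : ℕ}
    (G : ConnGraph V E) (lab : E → Fin k → ℤ)
    (hGKM : IsUnsignedGKM G lab) (hval : G.NValent n)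
    (ε c : E → E → ℤ) (hdata : IsCompatibleData G lab ε c) :
    Effective lab ↔
      (LinearIndependent ℤ (fun j : Fin k => (fun e => lab e j : E → ℤ)) ∧
        ∀ a : E → ℤ, G.IsLabelFunction ε c a →
          (fun e => (a e : ℚ)) ∈ Submodule.span ℚ
            (Set.range (fun j : Fin k => (fun e => (lab e j : ℚ) : E → ℚ))) →
          a ∈ Submodule.span ℤ
            (Set.range (fun j : Fin k => (fun e => lab e j : E → ℤ)))) := by
  classical
  constructor
  · intro heff
    have heff' : Submodule.span ℤ (Set.range lab) = ⊤ := heff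
    constructor
    · rw [Fintype.linearIndependent_iff]
      intro g hg j
      have hge : ∀ e, ∑ j, g j * lab e j = 0 := by
        intro e
        have := congrFun hg e
        simpa [Finset.sum_apply, smul_eq_mul] using this
      set L : (Fin k → ℤ) →ₗ[ℤ] ℤ := ∑ j, g j • LinearMap.proj j with hLdef
      have hLx : ∀ x : Fin k → ℤ, L x = ∑ j, g j * x j := by
        intro x; simp [hLdef, LinearMap.sum_apply, smul_eq_mul]
      have hker : Submodule.span ℤ (Set.range lab) ≤ LinearMap.ker L := by
        rw [Submodule.span_le]
        rintro _ ⟨e, rfl⟩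
        simp only [SetLike.mem_coe, LinearMap.mem_ker, hLx]
        exact hge e
      have h1 : L (Pi.single j 1) = 0 := by
        have : Pi.single j (1:ℤ) ∈ LinearMap.ker L := hker (heff' ▸ Submodule.mem_top)
        exact this
      rw [hLx] at h1
      simpa [Pi.single_apply, Finset.sum_ite_eq] using h1
    · intro a _ ha
      rw [Submodule.mem_span_range_iff_exists_fun] at ha
      obtain ⟨q, hq⟩ := ha
      have hqe : ∀ e, ∑ j, q j * lab e j = (a e : ℚ) := by
        intro e
        have := congrFun hq e
        simpa [Finset.sum_apply, smul_eq_mul] using this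
      have hint : ∀ i, ∃ z : ℤ, (z:ℚ) = q i := by
        intro i
        have hsingle : Pi.single i (1:ℤ) ∈ Submodule.span ℤ (Set.range lab) :=
          heff' ▸ Submodule.mem_top
        rw [Finsupp.mem_span_range_iff_exists_finsupp] at hsingle
        obtain ⟨d, hd⟩ := hsingle
        refine ⟨d.sum fun e z => z * a e, ?_⟩
        have hdj : ∀ j, ∑ e ∈ d.support, (d e : ℚ) * lab e j = ((Pi.single i (1:ℤ) : Fin k → ℤ) j : ℚ) := by
          intro j
          have h2 := congrFun hd j
          rw [Finsupp.sum] at h2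
          rw [Finset.sum_apply] at h2
          exact_mod_cast by push_cast [← h2, smul_eq_mul]; rfl
        rw [Finsupp.sum]
        push_cast
        calc ∑ e ∈ d.support, (d e : ℚ) * (a e : ℚ)
            = ∑ e ∈ d.support, ∑ j, q j * ((d e:ℚ) * lab e j) := by
              refine Finset.sum_congr rfl fun e _ => ?_
              rw [← hqe e, Finset.mul_sum]
              refine Finset.sum_congr rfl fun j _ => by ring
          _ = ∑ j, ∑ e ∈ d.support, q j * ((d e:ℚ) * lab e j) := Finset.sum_comm
          _ = ∑ j, q j * ∑ e ∈ d.support, (d e:ℚ) * lab e j := by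
              refine Finset.sum_congr rfl fun j _ => (Finset.mul_sum _ _ _).symm
          _ = ∑ j, q j * ((Pi.single i (1:ℤ) : Fin k → ℤ) j : ℚ) := by
              refine Finset.sum_congr rfl fun j _ => by rw [hdj j]
          _ = q i := by simp [Pi.single_apply, Finset.sum_ite_eq]
      choose t ht using hint
      rw [Submodule.mem_span_range_iff_exists_fun]
      refine ⟨t, ?_⟩
      funext e
      have : ((∑ j, t j * lab e j : ℤ) : ℚ) = ((a e : ℤ) : ℚ) := by
        push_cast
        rw [← hqe e]
        exact Finset.sum_congr rfl fun j _ => by rw [ht j]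
      have := Int.cast_injective (α := ℚ) this
      simpa [Finset.sum_apply, smul_eq_mul] using this
  · rintro ⟨hLI, hprim⟩
    by_contra hne
    have hne' : Submodule.span ℤ (Set.range lab) ≠ ⊤ := hne
    set M := Submodule.span ℤ (Set.range lab) with hM
    have hmem : ∀ e, lab e ∈ M := fun e => Submodule.subset_span ⟨e, rfl⟩
    obtain ⟨n', snf⟩ := M.smithNormalForm (Pi.basisFun ℤ (Fin k))
    by_cases hsurj : Function.Surjective snf.f
    · -- a i ≠ 0
      have hane : ∀ i, snf.a i ≠ 0 := by
        intro i h
        have hsn := snf.snf i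
        rw [h, zero_smul] at hsn
        exact snf.bN.ne_zero i (Subtype.ext hsn)
      have hnu : ∃ i0, ¬ IsUnit (snf.a i0) := by
        by_contra hall
        push_neg at hall
        apply hne'
        rw [eq_top_iff, ← snf.bM.span_eq, Submodule.span_le]
        rintro _ ⟨j, rfl⟩
        obtain ⟨i, rfl⟩ := hsurj j
        have hsn := snf.snf i
        have hmem' : snf.a i • snf.bM (snf.f i) ∈ M := hsn ▸ (snf.bN i).2
        rcases Int.isUnit_iff.mp (hall i) with h | h <;> rw [h] at hmem'
        · simpa using hmem'
        · simpa using M.neg_mem hmem'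
      obtain ⟨i0, hi0⟩ := hnu
      set L : (Fin k → ℤ) →ₗ[ℤ] ℤ := snf.bM.coord (snf.f i0) with hLdef
      set A : E → ℤ := fun e => snf.bN.repr ⟨lab e, hmem e⟩ i0 with hA
      have hkey : ∀ e, L (lab e) = snf.a i0 * A e := by
        intro e
        have h2 := snf.repr_apply_embedding_eq_repr_smul (m := (⟨lab e, hmem e⟩ : M)) (i := i0)
        simp only [map_smul, Finsupp.smul_apply, smul_eq_mul] at h2
        simpa [hLdef, hA, Module.Basis.coord_apply] using h2
      have haQ : (snf.a i0 : ℚ) ≠ 0 := Int.cast_ne_zero.mpr (hane i0)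
      have hAe : ∀ e, ∑ j, ((L (Pi.single j 1) : ℚ) / (snf.a i0 : ℚ)) * lab e j = (A e : ℚ) := by
        intro e
        have h3 : ((L (lab e) : ℤ) : ℚ) = ∑ j, (lab e j : ℚ) * (L (Pi.single j 1) : ℚ) := by
          rw [lin_expand L (lab e)]; push_cast; rfl
        calc ∑ j, ((L (Pi.single j 1) : ℚ) / (snf.a i0 : ℚ)) * lab e j
            = (∑ j, (lab e j : ℚ) * (L (Pi.single j 1) : ℚ)) / (snf.a i0 : ℚ) := by
              rw [Finset.sum_div]
              refine Finset.sum_congr rfl fun j _ => by ring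
          _ = ((L (lab e) : ℚ)) / (snf.a i0 : ℚ) := by rw [← h3]
          _ = (A e : ℚ) := by
              rw [hkey e]; push_cast; exact mul_div_cancel_left₀ _ haQ
      have hAlab : G.IsLabelFunction ε c A := by
        intro e e' h
        have hmemsub : (⟨lab (G.conn e e'), hmem _⟩ : M)
            = ε e e' • (⟨lab e', hmem e'⟩ : M) + c e e' • (⟨lab e, hmem e⟩ : M) := by
          apply Subtype.ext
          simpa using hdata.2.2.2 e e' h
        simp only [hA, hmemsub, map_add, map_smul, Finsupp.add_apply, Finsupp.smul_apply,
          smul_eq_mul]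
      have hAQ : (fun e => (A e : ℚ)) ∈ Submodule.span ℚ
          (Set.range (fun j : Fin k => (fun e => (lab e j : ℚ) : E → ℚ))) := by
        rw [Submodule.mem_span_range_iff_exists_fun]
        refine ⟨fun j => (L (Pi.single j 1) : ℚ) / (snf.a i0 : ℚ), ?_⟩
        funext e
        rw [Finset.sum_apply]
        simpa [smul_eq_mul] using hAe e
      obtain ⟨t, htA⟩ := (Submodule.mem_span_range_iff_exists_fun ℤ).mp (hprim A hAlab hAQ)
      have hte : ∀ e, ∑ j, (t j : ℚ) * lab e j = (A e : ℚ) := by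
        intro e
        have := congrFun htA e
        rw [Finset.sum_apply] at this
        exact_mod_cast by push_cast [← this, smul_eq_mul]; rfl
      have hr0 : (fun j => (L (Pi.single j 1) : ℚ) / (snf.a i0 : ℚ) - (t j : ℚ)) = 0 := by
        apply li_rat lab hLI
        intro e
        have hsplit : ∑ j, ((L (Pi.single j 1) : ℚ) / (snf.a i0 : ℚ) - (t j : ℚ)) * lab e j
            = (∑ j, ((L (Pi.single j 1) : ℚ) / (snf.a i0 : ℚ)) * lab e j)
              - ∑ j, (t j : ℚ) * lab e j := by
          rw [← Finset.sum_sub_distrib]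
          exact Finset.sum_congr rfl fun j _ => by ring
        rw [hsplit, hAe e, hte e, sub_self]
      have hLt : ∀ j, L (Pi.single j 1) = snf.a i0 * t j := by
        intro j
        have h5 := congrFun hr0 j
        rw [Pi.zero_apply, sub_eq_zero, div_eq_iff haQ] at h5
        have h6 : ((L (Pi.single j 1) : ℤ) : ℚ) = ((snf.a i0 * t j : ℤ) : ℚ) := by
          push_cast; rw [h5]; ring
        exact_mod_cast h6
      have h1 : L (snf.bM (snf.f i0)) = 1 := by simp [hLdef]
      have h0 : L (snf.bM (snf.f i0)) = snf.a i0 * ∑ j, snf.bM (snf.f i0) j * t j := by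
        rw [lin_expand L, Finset.mul_sum]
        exact Finset.sum_congr rfl fun j _ => by rw [hLt j]; ring
      exact hi0 (isUnit_of_dvd_one ⟨∑ j, snf.bM (snf.f i0) j * t j, by rw [← h0, h1]⟩)
    · have hex : ∃ i0, ∀ i, snf.f i ≠ i0 := by
        simpa [Function.Surjective] using hsurj
      obtain ⟨i0, hi0⟩ := hex
      have hi0' : i0 ∉ Set.range snf.f := by
        rintro ⟨i, rfl⟩; exact (hi0 i) rfl
      set L : (Fin k → ℤ) →ₗ[ℤ] ℤ := snf.bM.coord i0 with hLdef
      have hL0 : ∀ e, L (lab e) = 0 := fun e =>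
        LinearMap.mem_ker.mp (snf.le_ker_coord_of_notMem_range hi0' (hmem e))
      have hgz : ∀ j, L (Pi.single j 1) = 0 := by
        refine Fintype.linearIndependent_iff.mp hLI (fun j => L (Pi.single j 1)) ?_
        funext e
        simp only [Finset.sum_apply, Pi.smul_apply, smul_eq_mul, Pi.zero_apply]
        have h := lin_expand L (lab e)
        rw [hL0 e] at h
        calc ∑ j, L (Pi.single j 1) * lab e j
            = ∑ j, lab e j * L (Pi.single j 1) :=
              Finset.sum_congr rfl fun j _ => mul_comm _ _
          _ = 0 := h.symm
      have h1 : L (snf.bM i0) = 1 := by simp [hLdef]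
      have h0 : L (snf.bM i0) = 0 := by
        rw [lin_expand L]
        simp [hgz]
      rw [h1] at h0
      exact one_ne_zero h0
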